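/- Under the setting of orthogonal groups of equal size (U_gᵀU_h = 0 for g ≠ h, each U_g having the same number of columns), with T_i = ‖U_{g_i}ᵀ y‖ ordered T₁ > T₂ > ⋯ > T_G > 0, the set {t ≥ 0 : replacing T_s by t preserves the selection order at step s}, i.e. {t ≥ 0 : (η_s t + z_s)ᵀ(P_{g_i} − P_{g_j})(η_s t + z_s) ≥ 0 for all i ≤ j with s ∈ {i,j}}, where η_s = U_{g_s}U_{g_s}ᵀy/T_s and z_s = y − U_{g_s}U_{g_s}ᵀy, equals the interval [T_{s+1}, T_{s−1}] (with T₀ = ∞ and T_{G+1} = 0). -/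

import Mathlib

open Set Matrix

/-- Euclidean dot product on real tuples. -/
def dotp {ι : Type*} [Fintype ι] (v w : ι → ℝ) : ℝ := ∑ i, v i * w i

lemma dotp_eq {ι : Type*} [Fintype ι] (v w : ι → ℝ) : dotp v w = v ⬝ᵥ w := rfl

lemma dotp_self_nonneg {ι : Type*} [Fintype ι] (v : ι → ℝ) : 0 ≤ dotp v v :=
  Finset.sum_nonneg fun i _ => mul_self_nonneg _

theorem truncation_region_is_neighbor_interval
    {n G k : ℕ}
    (U : Fin G → Matrix (Fin n) (Fin k) ℝ)  -- orthogonal groups of equal size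
    (horthonormal : ∀ g, (U g)ᵀ * U g = 1)
    (horth : ∀ g h, g ≠ h → (U g)ᵀ * U h = 0)
    (y : Fin n → ℝ)
    (π : Equiv.Perm (Fin G))  -- selection order: g_i = π i
    (T : Fin G → ℝ)
    (hT : ∀ i, T i = Real.sqrt (dotp ((U (π i))ᵀ.mulVec y) ((U (π i))ᵀ.mulVec y)))
    (hTpos : ∀ i, 0 < T i)
    (hord : ∀ i j : Fin G, i < j → T j < T i)  -- T₁ > T₂ > ⋯ > T_G > 0
    (P : Fin G → Matrix (Fin n) (Fin n) ℝ)
    (hP : ∀ i, P i = U (π i) * (U (π i))ᵀ)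
    (s : Fin G)
    (η z : Fin n → ℝ)
    (hη : η = (T s)⁻¹ • (P s).mulVec y)
    (hz : z = y - (P s).mulVec y) :
    {t : ℝ | 0 ≤ t ∧ ∀ i j : Fin G, i ≤ j → (i = s ∨ j = s) →
        0 ≤ dotp (t • η + z) ((P i - P j).mulVec (t • η + z))}
    = {t : ℝ | 0 ≤ t
        ∧ (∀ h : (s : ℕ) + 1 < G, T ⟨(s : ℕ) + 1, h⟩ ≤ t)  -- lower limit T_{s+1} (0 if s = G)
        ∧ (∀ _h : 0 < (s : ℕ),
            t ≤ T ⟨(s : ℕ) - 1, lt_of_le_of_lt (Nat.sub_le _ _) s.isLt⟩)} := by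
  have hπ : ∀ i j : Fin G, i ≠ j → (U (π i))ᵀ * (U (π j)) = 0 :=
    fun i j hij => horth _ _ fun h => hij (π.injective h)
  set w : Fin G → Fin k → ℝ := fun i => (U (π i))ᵀ.mulVec y with hw
  have hT2 : ∀ i, (T i)^2 = dotp (w i) (w i) := by
    intro i
    rw [hT i, Real.sq_sqrt (dotp_self_nonneg _)]
  -- action of (U (π i))ᵀ on η and z
  have hUη : ∀ i : Fin G, i ≠ s → (U (π i))ᵀ.mulVec η = 0 := by
    intro i hi
    have h0 : (U (π i))ᵀ * (U (π s) * (U (π s))ᵀ) = 0 := by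
      rw [← Matrix.mul_assoc, hπ i s hi, Matrix.zero_mul]
    rw [hη, hP, mulVec_smul, mulVec_mulVec, h0, zero_mulVec, smul_zero]
  have hUηs : (U (π s))ᵀ.mulVec η = (T s)⁻¹ • w s := by
    have h1 : (U (π s))ᵀ * (U (π s) * (U (π s))ᵀ) = (U (π s))ᵀ := by
      rw [← Matrix.mul_assoc, horthonormal, Matrix.one_mul]
    rw [hη, hP, mulVec_smul, mulVec_mulVec, h1]
  have hUz : ∀ i : Fin G, i ≠ s → (U (π i))ᵀ.mulVec z = w i := by
    intro i hi
    have h0 : (U (π i))ᵀ * (U (π s) * (U (π s))ᵀ) = 0 := by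
      rw [← Matrix.mul_assoc, hπ i s hi, Matrix.zero_mul]
    rw [hz, mulVec_sub, hP, mulVec_mulVec, h0, zero_mulVec, sub_zero]
  have hUzs : (U (π s))ᵀ.mulVec z = 0 := by
    have h1 : (U (π s))ᵀ * (U (π s) * (U (π s))ᵀ) = (U (π s))ᵀ := by
      rw [← Matrix.mul_assoc, horthonormal, Matrix.one_mul]
    rw [hz, mulVec_sub, hP, mulVec_mulVec, h1, sub_self]
  -- quadratic form values
  have key : ∀ (t : ℝ) (i : Fin G),
      dotp (t • η + z) ((P i).mulVec (t • η + z))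
        = if i = s then t^2 else (T i)^2 := by
    intro t i
    have hrw : dotp (t • η + z) ((P i).mulVec (t • η + z))
        = dotp ((U (π i))ᵀ.mulVec (t • η + z)) ((U (π i))ᵀ.mulVec (t • η + z)) := by
      rw [dotp_eq, dotp_eq, hP, ← mulVec_mulVec, dotProduct_mulVec]
      congr 1
      rw [← transpose_transpose (U (π i)), vecMul_transpose, transpose_transpose]
    rw [hrw]
    by_cases hi : i = s
    · subst hi
      rw [mulVec_add, mulVec_smul, hUηs, hUzs, add_zero, smul_smul, dotp_eq,
        smul_dotProduct, dotProduct_smul, ← dotp_eq, ← hT2, smul_eq_mul, smul_eq_mul, if_pos rfl]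
      have hTs := (hTpos i).ne'
      field_simp
    · rw [mulVec_add, mulVec_smul, hUη i hi, hUz i hi, smul_zero, zero_add, ← hT2,
        if_neg hi]
  have keysub : ∀ (t : ℝ) (i j : Fin G),
      dotp (t • η + z) ((P i - P j).mulVec (t • η + z))
        = (if i = s then t^2 else (T i)^2) - (if j = s then t^2 else (T j)^2) := by
    intro t i j
    rw [dotp_eq, sub_mulVec, dotProduct_sub, ← dotp_eq, ← dotp_eq, key, key]
  ext t
  simp only [mem_setOf_eq]
  constructor
  · rintro ⟨ht, h⟩
    refine ⟨ht, ?_, ?_⟩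
    · intro hG
      set j : Fin G := ⟨(s : ℕ) + 1, hG⟩ with hj
      have hsj : s ≤ j := by
        apply le_of_lt
        simp [Fin.lt_def, hj]
      have hjs : j ≠ s := by
        intro hh
        have := congrArg Fin.val hh
        simp [hj] at this
      have := h s j hsj (Or.inl rfl)
      rw [keysub, if_pos rfl, if_neg hjs] at this
      nlinarith [hTpos j]
    · intro h0
      set i : Fin G := ⟨(s : ℕ) - 1, lt_of_le_of_lt (Nat.sub_le _ _) s.isLt⟩ with hi
      have his : i ≠ s := by
        intro hh
        have := congrArg Fin.val hh
        simp [hi] at this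
        omega
      have hsi : i ≤ s := by
        apply le_of_lt
        simp only [Fin.lt_def, hi]
        omega
      have := h i s hsi (Or.inr rfl)
      rw [keysub, if_pos rfl, if_neg his] at this
      nlinarith [hTpos i]
  · rintro ⟨ht, h1, h2⟩
    refine ⟨ht, ?_⟩
    intro i j hij hor
    rw [keysub]
    rcases hor with hi | hj
    · subst hi
      by_cases hjs : j = i
      · subst hjs; simp
      · rw [if_pos rfl, if_neg hjs]
        have hlt : i < j := lt_of_le_of_ne hij (Ne.symm hjs)
        have hG : (i : ℕ) + 1 < G := by
          have := j.isLt
          have := hlt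
          simp only [Fin.lt_def] at this
          omega
        have hTj : T j ≤ T ⟨(i : ℕ) + 1, hG⟩ := by
          rcases eq_or_lt_of_le (show (⟨(i : ℕ) + 1, hG⟩ : Fin G) ≤ j by
            simp only [Fin.le_def]; exact hlt) with he | hl
          · rw [he]
          · exact le_of_lt (hord _ _ hl)
        have := le_trans hTj (h1 hG)
        nlinarith [hTpos j]
    · subst hj
      by_cases his : i = j
      · subst his; simp
      · rw [if_pos rfl, if_neg his]
        have hlt : i < j := lt_of_le_of_ne hij his
        have h0 : 0 < (j : ℕ) := by
          have := hlt
          simp only [Fin.lt_def] at this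
          omega
        have hTi : T ⟨(j : ℕ) - 1, lt_of_le_of_lt (Nat.sub_le _ _) j.isLt⟩ ≤ T i := by
          rcases eq_or_lt_of_le (show i ≤ (⟨(j : ℕ) - 1, lt_of_le_of_lt (Nat.sub_le _ _) j.isLt⟩ : Fin G) by
            simp only [Fin.le_def]
            have := hlt
            simp only [Fin.lt_def] at this
            omega) with he | hl
          · rw [← he]
          · exact le_of_lt (hord _ _ hl)
        have := le_trans (h2 h0) hTi
        nlinarith [hTpos i]
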